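/- Let X be a metric space, let (ν_n) be a sequence of finite Borel measures on X and ν a finite Borel measure on X. Then the following are equivalent: (I) ν_n converges to ν in total variation; (IV) for every γ ≥ 0, sup over all Borel-measurable f : X → [−γ, γ] of |∫_X f dν_n − ∫_X f dν| tends to 0; (V) for every γ ≥ 0, sup over all Borel-measurable f : X → [−γ, γ] with bounded support of |∫_X f dν_n − ∫_X f dν| tends to 0; (VI) for every γ ≥ 0, sup over all continuous f : X → [−γ, γ] with bounded support of |∫_X f dν_n − ∫_X f dν| tends to 0. -/

import Mathlib

open MeasureTheory Filter Topology Set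

set_option linter.unusedSectionVars false

section AuxTV18

variable {X : Type*} [MetricSpace X] [MeasurableSpace X] [BorelSpace X]

private lemma aux_integrable {π : Measure X} [IsFiniteMeasure π] {f : X → ℝ} {C : ℝ}
    (hm : AEStronglyMeasurable f π) (hb : ∀ x, |f x| ≤ C) : Integrable f π :=
  (integrable_const C).mono' hm (Eventually.of_forall fun x => by
    simpa [Real.norm_eq_abs] using hb x)

private lemma aux_approx (π : Measure X) [IsFiniteMeasure π] {f : X → ℝ}
    (hf : Measurable f) (hb : ∀ x, f x ∈ Set.Icc (-1 : ℝ) 1) {ε : ℝ} (hε : 0 < ε) :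
    ∃ g : X → ℝ, Continuous g ∧ Bornology.IsBounded (tsupport g) ∧
      (∀ x, g x ∈ Set.Icc (-1 : ℝ) 1) ∧ ∫ x, |f x - g x| ∂π ≤ ε := by
  rcases isEmpty_or_nonempty X with hX | hX
  · have hπ : π = 0 := by
      ext s hs
      simp [Set.eq_empty_of_isEmpty s]
    refine ⟨0, continuous_const, ?_, fun x => by simp, by simp [hπ, hε.le]⟩
    have : tsupport (0 : X → ℝ) = ∅ := Set.eq_empty_of_isEmpty _
    simp [this]
  obtain ⟨x₀⟩ := hX
  have hfabs : ∀ x, |f x| ≤ 1 := fun x => abs_le.2 ⟨(hb x).1, (hb x).2⟩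
  have hfi : Integrable f π := aux_integrable hf.aestronglyMeasurable hfabs
  obtain ⟨g₀, hg₀, hg₀i⟩ := hfi.exists_boundedContinuous_integral_sub_le
    (show (0:ℝ) < ε/3 by positivity)
  set clamp : ℝ → ℝ := fun t => max (-1) (min 1 t) with hclamp
  have clampL : LipschitzWith 1 clamp := (LipschitzWith.id.const_min 1).const_max (-1)
  set g₁ : X → ℝ := fun x => clamp (g₀ x) with hg₁
  have hg₁c : Continuous g₁ := clampL.continuous.comp g₀.continuous
  have hg₁b : ∀ x, |g₁ x| ≤ 1 := fun x => abs_le.2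
    ⟨le_max_left _ _, max_le (by norm_num) (min_le_left _ _)⟩
  have hg₁close : ∀ x, |f x - g₁ x| ≤ |f x - g₀ x| := by
    intro x
    have h1 : clamp (f x) = f x := by
      rw [hclamp]; dsimp only
      rw [min_eq_right (hb x).2, max_eq_right (hb x).1]
    calc |f x - g₁ x| = |clamp (f x) - clamp (g₀ x)| := by rw [h1]
      _ ≤ |f x - g₀ x| := by
          have := clampL.dist_le_mul (f x) (g₀ x)
          simpa [Real.dist_eq] using this
  -- choose radius
  obtain ⟨R, hR⟩ : ∃ R : ℕ, π ((Metric.closedBall x₀ (R:ℝ))ᶜ) < ENNReal.ofReal (ε/3) := by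
    have h1 : Tendsto (fun R : ℕ => π ((Metric.closedBall x₀ (R:ℝ))ᶜ)) atTop
        (𝓝 (π (⋂ R : ℕ, (Metric.closedBall x₀ (R:ℝ))ᶜ))) := by
      apply tendsto_measure_iInter_atTop
        (fun n => (Metric.isClosed_closedBall.measurableSet).compl.nullMeasurableSet)
      · intro m n hmn
        exact Set.compl_subset_compl.2
          (Metric.closedBall_subset_closedBall (by exact_mod_cast hmn))
      · exact ⟨0, measure_ne_top π _⟩
    have h2 : (⋂ R : ℕ, (Metric.closedBall x₀ (R:ℝ))ᶜ) = ∅ := by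
      ext x
      simp only [Set.mem_iInter, Set.mem_compl_iff, Metric.mem_closedBall, not_le,
        Set.mem_empty_iff_false, iff_false, not_forall, not_lt]
      obtain ⟨n, hn⟩ := exists_nat_ge (dist x x₀)
      exact ⟨n, hn⟩
    rw [h2, measure_empty] at h1
    have hpos : (0:ENNReal) < ENNReal.ofReal (ε/3) := ENNReal.ofReal_pos.2 (by positivity)
    exact (h1.eventually (gt_mem_nhds hpos)).exists
  set χ : X → ℝ := fun x => max 0 (min 1 ((R:ℝ) + 1 - dist x x₀)) with hχdef
  have hχc : Continuous χ :=
    continuous_const.max (continuous_const.min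
      (continuous_const.sub (continuous_id.dist continuous_const)))
  have hχ0 : ∀ x, 0 ≤ χ x := fun x => le_max_left _ _
  have hχ1 : ∀ x, χ x ≤ 1 := fun x => max_le zero_le_one (min_le_left _ _)
  have hχone : ∀ x ∈ Metric.closedBall x₀ (R:ℝ), χ x = 1 := by
    intro x hx
    rw [hχdef]; dsimp only
    rw [min_eq_left (by have := Metric.mem_closedBall.1 hx; linarith),
      max_eq_right zero_le_one]
  have hχzero : ∀ x, x ∉ Metric.closedBall x₀ ((R:ℝ)+1) → χ x = 0 := by
    intro x hx
    rw [Metric.mem_closedBall, not_le] at hx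
    rw [hχdef]; dsimp only
    rw [max_eq_left ((min_le_right _ _).trans (by linarith))]
  have hgχ : ∀ x, |g₁ x * χ x| ≤ 1 := fun x => by
    rw [abs_mul]
    exact mul_le_one₀ (hg₁b x) (abs_nonneg _) (by rw [abs_of_nonneg (hχ0 x)]; exact hχ1 x)
  refine ⟨fun x => g₁ x * χ x, hg₁c.mul hχc, ?_, ?_, ?_⟩
  · apply (Metric.isBounded_closedBall (x := x₀) (r := (R:ℝ)+1)).subset
    apply closure_minimal _ Metric.isClosed_closedBall
    intro x hx
    by_contra hxc
    exact hx (by simp [hχzero x hxc])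
  · intro x
    rw [Set.mem_Icc, ← abs_le]
    exact hgχ x
  · set D : Set X := (Metric.closedBall x₀ (R:ℝ))ᶜ with hD
    have hDm : MeasurableSet D := Metric.isClosed_closedBall.measurableSet.compl
    have hfg₁i : Integrable (fun x => |f x - g₁ x|) π :=
      aux_integrable ((hf.sub hg₁c.measurable).abs).aestronglyMeasurable
        (C := 2) (fun x => by
          rw [abs_abs]
          calc |f x - g₁ x| ≤ |f x| + |g₁ x| := abs_sub _ _
            _ ≤ 2 := by linarith [hfabs x, hg₁b x])
    have hg₁gi : Integrable (fun x => |g₁ x - g₁ x * χ x|) π :=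
      aux_integrable ((hg₁c.sub (hg₁c.mul hχc)).measurable.abs).aestronglyMeasurable
        (C := 2) (fun x => by
          rw [abs_abs]
          calc |g₁ x - g₁ x * χ x| ≤ |g₁ x| + |g₁ x * χ x| := abs_sub _ _
            _ ≤ 2 := by
                have h := hgχ x
                linarith [hg₁b x])
    have step1 : ∫ x, |f x - g₁ x| ∂π ≤ ε/3 := by
      calc ∫ x, |f x - g₁ x| ∂π ≤ ∫ x, ‖f x - g₀ x‖ ∂π := by
            apply integral_mono hfg₁i (hfi.sub hg₀i).norm
            intro x
            simpa [Real.norm_eq_abs] using hg₁close x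
        _ ≤ ε/3 := hg₀
    have step2 : ∫ x, |g₁ x - g₁ x * χ x| ∂π ≤ ε/3 := by
      have hpt : ∀ x, |g₁ x - g₁ x * χ x| ≤ D.indicator (fun _ => (1:ℝ)) x := by
        intro x
        by_cases hx : x ∈ Metric.closedBall x₀ (R:ℝ)
        · have : D.indicator (fun _ => (1:ℝ)) x = 0 :=
            Set.indicator_of_notMem (by simpa [hD] using hx) _
          rw [this, hχone x hx]
          simp
        · have : D.indicator (fun _ => (1:ℝ)) x = 1 :=
            Set.indicator_of_mem (by simpa [hD] using hx) _
          rw [this]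
          calc |g₁ x - g₁ x * χ x| = |g₁ x| * |1 - χ x| := by
                rw [← abs_mul]; ring_nf
            _ ≤ 1 * 1 := mul_le_mul (hg₁b x)
                (abs_le.2 ⟨by linarith [hχ1 x], by linarith [hχ0 x]⟩)
                (abs_nonneg _) zero_le_one
            _ = 1 := one_mul 1
      calc ∫ x, |g₁ x - g₁ x * χ x| ∂π ≤ ∫ x, D.indicator (fun _ => (1:ℝ)) x ∂π :=
            integral_mono hg₁gi ((integrable_const (1:ℝ)).indicator hDm) hpt
        _ = (π D).toReal • (1:ℝ) := integral_indicator_const (1:ℝ) hDm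
        _ ≤ ε/3 := by
            rw [smul_eq_mul, mul_one]
            exact ENNReal.toReal_le_of_le_ofReal (by positivity) hR.le
    calc ∫ x, |f x - g₁ x * χ x| ∂π
        ≤ ∫ x, (|f x - g₁ x| + |g₁ x - g₁ x * χ x|) ∂π := by
          apply integral_mono _ (hfg₁i.add hg₁gi) (fun x => abs_sub_le _ _ _)
          exact aux_integrable ((hf.sub (hg₁c.mul hχc).measurable).abs).aestronglyMeasurable
            (C := 2) (fun x => by
              rw [abs_abs]
              calc |f x - g₁ x * χ x| ≤ |f x| + |g₁ x * χ x| := abs_sub _ _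
                _ ≤ 2 := by
                    have h := hgχ x
                    linarith [hfabs x])
      _ = (∫ x, |f x - g₁ x| ∂π) + ∫ x, |g₁ x - g₁ x * χ x| ∂π :=
          integral_add hfg₁i hg₁gi
      _ ≤ ε/3 + ε/3 := add_le_add step1 step2
      _ ≤ ε := by linarith


private lemma aux_bdd18 {ρ μ : Measure X} [IsFiniteMeasure ρ] [IsFiniteMeasure μ] {γ : ℝ}
    {ι : Sort*} (F : ι → X → ℝ) (hb : ∀ i x, F i x ∈ Set.Icc (-γ) γ) :
    BddAbove (Set.range fun i => |∫ x, F i x ∂ρ - ∫ x, F i x ∂μ|) := by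
  refine ⟨γ * (ρ Set.univ).toReal + γ * (μ Set.univ).toReal, ?_⟩
  rintro r ⟨i, rfl⟩
  have h1 : ‖∫ x, F i x ∂ρ‖ ≤ γ * (ρ Set.univ).toReal :=
    norm_integral_le_of_norm_le_const (Eventually.of_forall fun x => by
      simpa [Real.norm_eq_abs, abs_le] using ⟨(hb i x).1, (hb i x).2⟩)
  have h2 : ‖∫ x, F i x ∂μ‖ ≤ γ * (μ Set.univ).toReal :=
    norm_integral_le_of_norm_le_const (Eventually.of_forall fun x => by
      simpa [Real.norm_eq_abs, abs_le] using ⟨(hb i x).1, (hb i x).2⟩)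
  calc |∫ x, F i x ∂ρ - ∫ x, F i x ∂μ| ≤ ‖∫ x, F i x ∂ρ‖ + ‖∫ x, F i x ∂μ‖ := by
        simpa [Real.norm_eq_abs] using abs_sub (∫ x, F i x ∂ρ) (∫ x, F i x ∂μ)
    _ ≤ _ := add_le_add h1 h2


private lemma aux_tsupport_zero : tsupport (fun _ : X => (0:ℝ)) = ∅ := by
  simp [tsupport]

private lemma aux_ne1 {γ : ℝ} (hγ : 0 ≤ γ) :
    Nonempty {f : X → ℝ // Measurable f ∧ ∀ x, f x ∈ Set.Icc (-γ) γ} :=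
  ⟨⟨fun _ => 0, measurable_const, fun _ => ⟨neg_nonpos.2 hγ, hγ⟩⟩⟩

private lemma aux_ne2 {γ : ℝ} (hγ : 0 ≤ γ) :
    Nonempty {f : X → ℝ // Measurable f ∧ Bornology.IsBounded (tsupport f) ∧
      ∀ x, f x ∈ Set.Icc (-γ) γ} :=
  ⟨⟨fun _ => 0, measurable_const, by rw [aux_tsupport_zero]; exact Bornology.isBounded_empty,
    fun _ => ⟨neg_nonpos.2 hγ, hγ⟩⟩⟩

private lemma aux_ne3 {γ : ℝ} (hγ : 0 ≤ γ) :
    Nonempty {f : X → ℝ // Continuous f ∧ Bornology.IsBounded (tsupport f) ∧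
      ∀ x, f x ∈ Set.Icc (-γ) γ} :=
  ⟨⟨fun _ => 0, continuous_const, by rw [aux_tsupport_zero]; exact Bornology.isBounded_empty,
    fun _ => ⟨neg_nonpos.2 hγ, hγ⟩⟩⟩


/-- The key inequality: the sup over measurable functions bounded by 1 is at most the sup over
continuous functions with bounded support bounded by 1. -/
private lemma aux_le18 (ρ μ : Measure X) [IsFiniteMeasure ρ] [IsFiniteMeasure μ] :
    (⨆ f : {f : X → ℝ // Measurable f ∧ ∀ x, f x ∈ Set.Icc (-1 : ℝ) 1},
        |∫ x, f.1 x ∂ρ - ∫ x, f.1 x ∂μ|)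
      ≤ ⨆ f : {f : X → ℝ // Continuous f ∧ Bornology.IsBounded (tsupport f) ∧
          ∀ x, f x ∈ Set.Icc (-1 : ℝ) 1}, |∫ x, f.1 x ∂ρ - ∫ x, f.1 x ∂μ| := by
  have hbddC : BddAbove (Set.range fun f : {f : X → ℝ // Continuous f ∧
      Bornology.IsBounded (tsupport f) ∧ ∀ x, f x ∈ Set.Icc (-1 : ℝ) 1} =>
      |∫ x, f.1 x ∂ρ - ∫ x, f.1 x ∂μ|) :=
    aux_bdd18 (fun f : {f : X → ℝ // Continuous f ∧ Bornology.IsBounded (tsupport f) ∧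
      ∀ x, f x ∈ Set.Icc (-1 : ℝ) 1} => f.1) (fun f x => f.2.2.2 x)
  haveI := aux_ne1 (X := X) zero_le_one
  apply ciSup_le
  rintro ⟨f, hf, hb⟩
  apply le_of_forall_pos_le_add
  intro ε hε
  obtain ⟨g, hgc, hgs, hgb, hgint⟩ := aux_approx (ρ + μ) hf hb hε
  have hfabs : ∀ x, |f x| ≤ 1 := fun x => abs_le.2 ⟨(hb x).1, (hb x).2⟩
  have hgabs : ∀ x, |g x| ≤ 1 := fun x => abs_le.2 ⟨(hgb x).1, (hgb x).2⟩
  have hfiρ : Integrable f ρ := aux_integrable hf.aestronglyMeasurable hfabs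
  have hfiμ : Integrable f μ := aux_integrable hf.aestronglyMeasurable hfabs
  have hgiρ : Integrable g ρ := aux_integrable hgc.measurable.aestronglyMeasurable hgabs
  have hgiμ : Integrable g μ := aux_integrable hgc.measurable.aestronglyMeasurable hgabs
  have hsum : (∫ x, |f x - g x| ∂ρ) + (∫ x, |f x - g x| ∂μ) = ∫ x, |f x - g x| ∂(ρ + μ) :=
    (integral_add_measure (hfiρ.sub hgiρ).abs (hfiμ.sub hgiμ).abs).symm
  have habsρ : |∫ x, f x ∂ρ - ∫ x, g x ∂ρ| ≤ ∫ x, |f x - g x| ∂ρ := by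
    rw [← integral_sub hfiρ hgiρ]
    simpa [Real.norm_eq_abs] using norm_integral_le_integral_norm (fun x => f x - g x) (μ := ρ)
  have habsμ : |∫ x, f x ∂μ - ∫ x, g x ∂μ| ≤ ∫ x, |f x - g x| ∂μ := by
    rw [← integral_sub hfiμ hgiμ]
    simpa [Real.norm_eq_abs] using norm_integral_le_integral_norm (fun x => f x - g x) (μ := μ)
  have key : |∫ x, f x ∂ρ - ∫ x, f x ∂μ|
      ≤ |∫ x, g x ∂ρ - ∫ x, g x ∂μ| + ∫ x, |f x - g x| ∂(ρ + μ) := by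
    have h : ∫ x, f x ∂ρ - ∫ x, f x ∂μ
        = (∫ x, g x ∂ρ - ∫ x, g x ∂μ) + ((∫ x, f x ∂ρ - ∫ x, g x ∂ρ)
          - (∫ x, f x ∂μ - ∫ x, g x ∂μ)) := by ring
    rw [h, ← hsum]
    calc |(∫ x, g x ∂ρ - ∫ x, g x ∂μ) + ((∫ x, f x ∂ρ - ∫ x, g x ∂ρ)
          - (∫ x, f x ∂μ - ∫ x, g x ∂μ))|
        ≤ |∫ x, g x ∂ρ - ∫ x, g x ∂μ| + |(∫ x, f x ∂ρ - ∫ x, g x ∂ρ)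
          - (∫ x, f x ∂μ - ∫ x, g x ∂μ)| := abs_add_le _ _
      _ ≤ |∫ x, g x ∂ρ - ∫ x, g x ∂μ| + (|∫ x, f x ∂ρ - ∫ x, g x ∂ρ|
          + |∫ x, f x ∂μ - ∫ x, g x ∂μ|) := by
            exact add_le_add le_rfl (abs_sub _ _)
      _ ≤ _ := add_le_add le_rfl (add_le_add habsρ habsμ)
  refine key.trans (add_le_add ?_ hgint)
  exact le_ciSup hbddC (⟨g, hgc, hgs, hgb⟩ : {f : X → ℝ // Continuous f ∧
      Bornology.IsBounded (tsupport f) ∧ ∀ x, f x ∈ Set.Icc (-1 : ℝ) 1})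

end AuxTV18

/-- On a metric space, total-variation convergence of finite Borel measures is equivalent to
the corresponding uniform convergence over measurable functions bounded by γ, over measurable
functions bounded by γ with bounded support, and over continuous functions bounded by γ with
bounded support, for every γ ≥ 0. -/
theorem stmt18 {X : Type*} [MetricSpace X] [MeasurableSpace X] [BorelSpace X]
    (ν : ℕ → Measure X) (μ : Measure X)
    (hν : ∀ n, IsFiniteMeasure (ν n)) (hμ : IsFiniteMeasure μ) :
    List.TFAE
      [Tendsto (fun n => ⨆ f : {f : X → ℝ // Measurable f ∧ ∀ x, f x ∈ Set.Icc (-1 : ℝ) 1},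
          |∫ x, f.1 x ∂(ν n) - ∫ x, f.1 x ∂μ|) atTop (𝓝 0),
       ∀ γ : ℝ, 0 ≤ γ →
        Tendsto (fun n => ⨆ f : {f : X → ℝ // Measurable f ∧ ∀ x, f x ∈ Set.Icc (-γ) γ},
          |∫ x, f.1 x ∂(ν n) - ∫ x, f.1 x ∂μ|) atTop (𝓝 0),
       ∀ γ : ℝ, 0 ≤ γ →
        Tendsto (fun n => ⨆ f : {f : X → ℝ // Measurable f ∧
            Bornology.IsBounded (tsupport f) ∧ ∀ x, f x ∈ Set.Icc (-γ) γ},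
          |∫ x, f.1 x ∂(ν n) - ∫ x, f.1 x ∂μ|) atTop (𝓝 0),
       ∀ γ : ℝ, 0 ≤ γ →
        Tendsto (fun n => ⨆ f : {f : X → ℝ // Continuous f ∧
            Bornology.IsBounded (tsupport f) ∧ ∀ x, f x ∈ Set.Icc (-γ) γ},
          |∫ x, f.1 x ∂(ν n) - ∫ x, f.1 x ∂μ|) atTop (𝓝 0)] := by
  haveI := hν
  haveI := hμ
  tfae_have 1 → 2 := by
    intro h1 γ hγ
    haveI := aux_ne1 (X := X) hγ
    haveI := aux_ne1 (X := X) (zero_le_one (α := ℝ))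
    apply squeeze_zero (fun n => Real.iSup_nonneg fun f => abs_nonneg _)
      (g := fun n => γ * ⨆ f : {f : X → ℝ // Measurable f ∧ ∀ x, f x ∈ Set.Icc (-1 : ℝ) 1},
        |∫ x, f.1 x ∂(ν n) - ∫ x, f.1 x ∂μ|)
    · intro n
      rcases eq_or_lt_of_le hγ with hγ0 | hγpos
      · apply ciSup_le
        rintro ⟨f, hm, hb⟩
        have hf0 : f = fun _ => (0:ℝ) := by
          funext x
          have := hb x
          rw [← hγ0] at this
          simpa using le_antisymm this.2 (by simpa using this.1)
        calc |∫ x, f x ∂(ν n) - ∫ x, f x ∂μ| = 0 := by rw [hf0]; simp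
          _ ≤ _ := mul_nonneg hγ (Real.iSup_nonneg fun f => abs_nonneg _)
      · apply ciSup_le
        rintro ⟨f, hm, hb⟩
        set f' : X → ℝ := fun x => γ⁻¹ * f x with hf'
        have hf'm : Measurable f' := hm.const_mul γ⁻¹
        have hf'b : ∀ x, f' x ∈ Set.Icc (-1 : ℝ) 1 := by
          intro x
          rw [Set.mem_Icc, ← abs_le, hf']
          dsimp only
          rw [abs_mul, abs_of_nonneg (inv_nonneg.2 hγ)]
          calc γ⁻¹ * |f x| ≤ γ⁻¹ * γ :=
                mul_le_mul_of_nonneg_left (abs_le.2 ⟨(hb x).1, (hb x).2⟩) (inv_nonneg.2 hγ)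
            _ = 1 := inv_mul_cancel₀ hγpos.ne'
        have heq : |∫ x, f x ∂(ν n) - ∫ x, f x ∂μ|
            = γ * |∫ x, f' x ∂(ν n) - ∫ x, f' x ∂μ| := by
          rw [hf']
          simp only [integral_const_mul]
          rw [← mul_sub, abs_mul, abs_of_nonneg (inv_nonneg.2 hγ), ← mul_assoc,
            mul_inv_cancel₀ hγpos.ne', one_mul]
        rw [heq]
        have hbdd : BddAbove (Set.range fun f : {f : X → ℝ // Measurable f ∧
            ∀ x, f x ∈ Set.Icc (-1 : ℝ) 1} => |∫ x, f.1 x ∂(ν n) - ∫ x, f.1 x ∂μ|) :=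
          aux_bdd18 _ (fun f x => f.2.2 x)
        exact mul_le_mul_of_nonneg_left (le_ciSup hbdd ⟨f', hf'm, hf'b⟩) hγ
    · simpa using h1.const_mul γ
  tfae_have 2 → 3 := by
    intro h2 γ hγ
    haveI := aux_ne1 (X := X) hγ
    haveI := aux_ne2 (X := X) hγ
    apply squeeze_zero (fun n => Real.iSup_nonneg fun f => abs_nonneg _)
      (g := fun n => ⨆ f : {f : X → ℝ // Measurable f ∧ ∀ x, f x ∈ Set.Icc (-γ) γ},
        |∫ x, f.1 x ∂(ν n) - ∫ x, f.1 x ∂μ|) _ (h2 γ hγ)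
    intro n
    apply ciSup_le
    rintro ⟨f, hm, hs, hb⟩
    have hbdd : BddAbove (Set.range fun f : {f : X → ℝ // Measurable f ∧
        ∀ x, f x ∈ Set.Icc (-γ) γ} => |∫ x, f.1 x ∂(ν n) - ∫ x, f.1 x ∂μ|) :=
      aux_bdd18 _ (fun f x => f.2.2 x)
    exact le_ciSup hbdd ⟨f, hm, hb⟩
  tfae_have 3 → 4 := by
    intro h3 γ hγ
    haveI := aux_ne2 (X := X) hγ
    haveI := aux_ne3 (X := X) hγ
    apply squeeze_zero (fun n => Real.iSup_nonneg fun f => abs_nonneg _)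
      (g := fun n => ⨆ f : {f : X → ℝ // Measurable f ∧
          Bornology.IsBounded (tsupport f) ∧ ∀ x, f x ∈ Set.Icc (-γ) γ},
        |∫ x, f.1 x ∂(ν n) - ∫ x, f.1 x ∂μ|) _ (h3 γ hγ)
    intro n
    apply ciSup_le
    rintro ⟨f, hc, hs, hb⟩
    have hbdd : BddAbove (Set.range fun f : {f : X → ℝ // Measurable f ∧
        Bornology.IsBounded (tsupport f) ∧ ∀ x, f x ∈ Set.Icc (-γ) γ} =>
        |∫ x, f.1 x ∂(ν n) - ∫ x, f.1 x ∂μ|) :=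
      aux_bdd18 _ (fun f x => f.2.2.2 x)
    exact le_ciSup hbdd ⟨f, hc.measurable, hs, hb⟩
  tfae_have 4 → 1 := by
    intro h4
    haveI := aux_ne1 (X := X) (zero_le_one (α := ℝ))
    haveI := aux_ne3 (X := X) (zero_le_one (α := ℝ))
    apply squeeze_zero (fun n => Real.iSup_nonneg fun f => abs_nonneg _)
      (g := fun n => ⨆ f : {f : X → ℝ // Continuous f ∧
          Bornology.IsBounded (tsupport f) ∧ ∀ x, f x ∈ Set.Icc (-(1:ℝ)) 1},
        |∫ x, f.1 x ∂(ν n) - ∫ x, f.1 x ∂μ|) _ ?_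
    · intro n
      have := aux_le18 (ν n) μ
      simpa using this
    · simpa using h4 1 zero_le_one
  tfae_finish
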